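/- arXiv:2107.12315 — 5 statements merged into one kernel-verified Lean document; each statement's English description precedes it below -/
import Mathlib

section
/- Let G be a connected graph with vertices {1,...,N} and let F be a face of the symmetric edge polytope ∇_G = conv{±(e_i - e_j) : {i,j} ∈ E(G)} ⊂ ℝ^N. Then the subgraph G_F of G whose edges are the {i,j} with e_i - e_j ∈ F or e_j - e_i ∈ F is bipartite. -/
noncomputable def stdBasis {N : ℕ} (i : Fin N) : Fin N → ℝ := Pi.single i 1

def nabla {N : ℕ} (G : SimpleGraph (Fin N)) : Set (Fin N → ℝ) :=
  {x | ∃ i j, G.Adj i j ∧ x = stdBasis i - stdBasis j}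

noncomputable def inn {N : ℕ} (x α : Fin N → ℝ) : ℝ := ∑ i, x i * α i

def IsFace {N : ℕ} (G : SimpleGraph (Fin N)) (F : Set (Fin N → ℝ)) : Prop :=
  ∃ α : Fin N → ℝ, (∀ x ∈ nabla G, -1 ≤ inn x α) ∧
    F = {x | x ∈ nabla G ∧ inn x α = -1}

def IsFacet {N : ℕ} (G : SimpleGraph (Fin N)) (F : Set (Fin N → ℝ)) : Prop :=
  IsFace G F ∧ Module.finrank ℝ (vectorSpan ℝ F) = N - 2

def faceGraph {N : ℕ} (F : Set (Fin N → ℝ)) : SimpleGraph (Fin N) :=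
  SimpleGraph.fromRel (fun i j => stdBasis i - stdBasis j ∈ F)

def MaxBipartiteSubgraph {N : ℕ} (G H : SimpleGraph (Fin N)) : Prop :=
  H ≤ G ∧ H.Colorable 2 ∧ ∀ H', H' ≤ G → H'.Colorable 2 → H ≤ H' → H' = H

def inducedOn {N : ℕ} (G : SimpleGraph (Fin N)) (s : Set (Fin N)) : SimpleGraph (Fin N) where
  Adj i j := G.Adj i j ∧ i ∈ s ∧ j ∈ s
  symm := by constructor; intro i j h; exact ⟨h.1.symm, h.2.2, h.2.1⟩
  loopless := by constructor; intro i h; exact G.irrefl h.1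


theorem stmt4 {N : ℕ} (G : SimpleGraph (Fin N)) (hG : G.Connected)
    (F : Set (Fin N → ℝ)) (hF : IsFace G F) :
    (faceGraph F).Colorable 2 := by
  obtain ⟨α, hα, hFe⟩ := hF
  have hinn : ∀ i j : Fin N, inn (stdBasis i - stdBasis j) α = α i - α j := by
    intro i j
    simp [inn, stdBasis, sub_mul, Finset.sum_sub_distrib, Pi.single_apply]
  have key : ∀ i j : Fin N, (faceGraph F).Adj i j → α j = α i + 1 ∨ α i = α j + 1 := by
    intro i j h
    obtain ⟨hne, h | h⟩ := h
    · have := (hFe ▸ h).2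
      rw [hinn] at this
      left; linarith
    · have := (hFe ▸ h).2
      rw [hinn] at this
      right; linarith
  have : Nonempty ((faceGraph F).Coloring (ZMod 2)) := by
    refine ⟨SimpleGraph.Coloring.mk (fun v => ((⌊α v⌋ : ℤ) : ZMod 2)) ?_⟩
    intro i j h hc
    rcases key i j h with h1 | h1 <;>
    · rw [h1, Int.floor_add_one] at hc
      push_cast at hc
      simp [add_eq_left, left_eq_add] at hc
  have hcard : Fintype.card (ZMod 2) = 2 := rfl
  exact hcard ▸ this.some.colorable
end

section
/- Let G be a connected graph and α a facet inner normal with ⟨x,α⟩ ≥ −1 for all x ∈ ∇_G and ⟨x,α⟩ = −1 exactly for x in the facet F. Then every cycle i_1 ↔ i_2 ↔ ... ↔ i_ℓ ↔ i_1 contained in the face subgraph G_F has even length ℓ. -/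
lemma inn_sub' {N : ℕ} (i j : Fin N) (α : Fin N → ℝ) :
    inn (stdBasis i - stdBasis j) α = α i - α j := by
  simp [inn, stdBasis, sub_mul, Finset.sum_sub_distrib, Pi.single_apply, Finset.sum_ite_eq']

lemma walk_parity {N : ℕ} (F : Set (Fin N → ℝ)) (α : Fin N → ℝ)
    (hF : ∀ x ∈ F, inn x α = -1) :
    ∀ {u w : Fin N} (p : (faceGraph F).Walk u w),
      ∃ k : ℤ, α u - α w = (k : ℝ) ∧ (k : ZMod 2) = (p.length : ZMod 2) := by
  intro u w p
  induction p with
  | nil => exact ⟨0, by simp, by simp⟩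
  | @cons a b c h p ih =>
    obtain ⟨k, hk, hk2⟩ := ih
    obtain ⟨hne, hrel⟩ := h
    have hab : α a - α b = -1 ∨ α a - α b = 1 := by
      rcases hrel with h1 | h1
      · left; rw [← inn_sub' a b α]; exact hF _ h1
      · right
        have := hF _ h1
        rw [inn_sub'] at this
        linarith
    rcases hab with h1 | h1
    · refine ⟨k - 1, by push_cast; linarith, ?_⟩
      show ((k - 1 : ℤ) : ZMod 2) = ((p.length + 1 : ℕ) : ZMod 2)
      push_cast
      rw [CharTwo.sub_eq_add, hk2]
    · refine ⟨k + 1, by push_cast; linarith, ?_⟩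
      show ((k + 1 : ℤ) : ZMod 2) = ((p.length + 1 : ℕ) : ZMod 2)
      push_cast
      rw [hk2]

theorem stmt5 {N : ℕ} (G : SimpleGraph (Fin N)) (hG : G.Connected)
    (α : Fin N → ℝ) (F : Set (Fin N → ℝ))
    (hmin : ∀ x ∈ nabla G, -1 ≤ inn x α)
    (hFdef : F = {x | x ∈ nabla G ∧ inn x α = -1})
    (v : Fin N) (c : (faceGraph F).Walk v v) (hc : c.IsCycle) :
    Even c.length := by
  have hF : ∀ x ∈ F, inn x α = -1 := by
    intro x hx; rw [hFdef] at hx; exact hx.2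
  obtain ⟨k, hk, hk2⟩ := walk_parity F α hF c
  have hk0 : k = 0 := by
    have : (k : ℝ) = 0 := by linarith
    exact_mod_cast this
  subst hk0
  simp only [Int.cast_zero] at hk2
  rw [even_iff_two_dvd]
  exact (ZMod.natCast_eq_zero_iff _ _).mp hk2.symm
end

section
/- Let G be a connected graph, F a facet of ∇_G with primitive (integer) inner normal α, and let O⃗ be a cycle in G with a coherent orientation. Then the number of oriented edges of the directed facet subgraph G⃗_F that agree with the orientation of O⃗ equals the number that disagree: |E(G⃗_F) ∩ E(O⃗)| = |E(G⃗_F) ∩ E(−O⃗)|. -/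
noncomputable def innL {N : ℕ} (α : Fin N → ℝ) : (Fin N → ℝ) →ₗ[ℝ] ℝ where
  toFun x := inn x α
  map_add' x y := by simp [inn, add_mul, Finset.sum_add_distrib]
  map_smul' c x := by simp [inn, Finset.mul_sum, mul_assoc]

@[simp] lemma innL_apply {N : ℕ} (α x : Fin N → ℝ) : innL α x = inn x α := rfl

lemma inn_basis {N : ℕ} (α : Fin N → ℝ) (i : Fin N) : inn (stdBasis i) α = α i := by
  simp [inn, stdBasis, Pi.single_apply, ite_mul]

lemma inn_sub_basis {N : ℕ} (α : Fin N → ℝ) (i j : Fin N) :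
    inn (stdBasis i - stdBasis j) α = α i - α j := by
  simp [inn, stdBasis, sub_mul, Finset.sum_sub_distrib, Pi.single_apply, ite_mul]

lemma reachable_face {N : ℕ} (G : SimpleGraph (Fin N)) (F : Set (Fin N → ℝ)) (α : Fin N → ℝ)
    (h₂ : F = {x | x ∈ nabla G ∧ inn x α = -1})
    (hrank : Module.finrank ℝ (vectorSpan ℝ F) = N - 2)
    (x₀ : Fin N → ℝ) (hx₀ : x₀ ∈ F) (i j : Fin N) : (faceGraph F).Reachable i j := by
  by_contra hreach
  classical
  set β : Fin N → ℝ := fun k => if (faceGraph F).Reachable i k then 1 else 0 with hβ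
  have hmem : ∀ x ∈ F, ∃ a b, x = stdBasis a - stdBasis b ∧ (faceGraph F).Adj a b := by
    intro x hx
    have hx' := hx
    rw [h₂] at hx'
    obtain ⟨⟨a, b, hab, rfl⟩, hval⟩ := hx'
    refine ⟨a, b, rfl, ?_⟩
    have hne : a ≠ b := by
      rintro rfl
      rw [inn_sub_basis] at hval
      linarith
    exact ⟨hne, Or.inl hx⟩
  have hβF : ∀ x ∈ F, innL β x = 0 := by
    intro x hx
    obtain ⟨a, b, rfl, hadj⟩ := hmem x hx
    have hiff : (faceGraph F).Reachable i a ↔ (faceGraph F).Reachable i b :=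
      ⟨fun h => h.trans hadj.reachable, fun h => h.trans hadj.symm.reachable⟩
    have hβab : β a = β b := by simp only [hβ]; rw [if_congr hiff rfl rfl]
    rw [innL_apply, inn_sub_basis, hβab, sub_self]
  have h1F : ∀ x ∈ F, innL (fun _ => (1:ℝ)) x = 0 := by
    intro x hx
    obtain ⟨a, b, rfl, -⟩ := hmem x hx
    rw [innL_apply, inn_sub_basis, sub_self]
  set φ := (innL β).prod (innL (fun _ => (1:ℝ))) with hφ
  have hβi : β i = 1 := by simp only [hβ]; rw [if_pos (SimpleGraph.Reachable.refl i)]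
  have hβj : β j = 0 := by simp [hβ, hreach]
  have hφsurj : Function.Surjective φ := by
    rintro ⟨a, b⟩
    refine ⟨a • stdBasis i + (b - a) • stdBasis j, ?_⟩
    simp only [hφ, LinearMap.prod_apply, Function.prod, map_add, map_smul, innL_apply, inn_basis,
      smul_eq_mul, hβi, hβj]
    simp [Prod.ext_iff]
  have hker : Module.finrank ℝ (LinearMap.ker φ) = N - 2 := by
    have h := LinearMap.finrank_range_add_finrank_ker φ
    rw [LinearMap.range_eq_top.mpr hφsurj] at h
    simp only [finrank_top] at h
    have h2 : Module.finrank ℝ (ℝ × ℝ) = 2 := by simp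
    have hN : Module.finrank ℝ (Fin N → ℝ) = N := by simp
    omega
  have hspanle : Submodule.span ℝ F ≤ LinearMap.ker φ := by
    rw [Submodule.span_le]
    intro x hx
    have : φ x = 0 := by
      simp only [hφ, LinearMap.prod_apply, Function.prod, Prod.mk_eq_zero]
      exact ⟨hβF x hx, h1F x hx⟩
    exact this
  have hvle : vectorSpan ℝ F ≤ Submodule.span ℝ F := by
    rw [vectorSpan_def, Submodule.span_le]
    rintro x ⟨a, ha, b, hb, rfl⟩
    exact sub_mem (Submodule.subset_span ha) (Submodule.subset_span hb)
  have hx₀n : x₀ ∉ vectorSpan ℝ F := by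
    intro h
    have hkerα : vectorSpan ℝ F ≤ LinearMap.ker (innL α) := by
      rw [vectorSpan_def, Submodule.span_le]
      rintro x ⟨a, ha, b, hb, rfl⟩
      have ha' : inn a α = -1 := (h₂ ▸ ha).2
      have hb' : inn b α = -1 := (h₂ ▸ hb).2
      have : innL α (a - b) = 0 := by rw [map_sub]; simp [ha', hb']
      exact this
    have h0 : innL α x₀ = 0 := hkerα h
    have hx₀v : inn x₀ α = -1 := (h₂ ▸ hx₀).2
    rw [innL_apply, hx₀v] at h0
    linarith
  have hlt : vectorSpan ℝ F < Submodule.span ℝ F :=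
    lt_of_le_of_ne hvle (fun h => hx₀n (by rw [h]; exact Submodule.subset_span hx₀))
  have h1 := Submodule.finrank_lt_finrank_of_lt hlt
  have h2 := Submodule.finrank_mono hspanle
  rw [hrank] at h1
  rw [hker] at h2
  omega

lemma diff_int {N : ℕ} (G : SimpleGraph (Fin N)) (F : Set (Fin N → ℝ)) (α : Fin N → ℝ)
    (h₂ : F = {x | x ∈ nabla G ∧ inn x α = -1})
    (hrank : Module.finrank ℝ (vectorSpan ℝ F) = N - 2)
    (x₀ : Fin N → ℝ) (hx₀ : x₀ ∈ F) (i j : Fin N) : ∃ k : ℤ, α i - α j = (k : ℝ) := by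
  obtain ⟨w⟩ := reachable_face G F α h₂ hrank x₀ hx₀ i j
  induction w with
  | nil => exact ⟨0, by simp⟩
  | @cons u v' j h p ih =>
    obtain ⟨k, hk⟩ := ih
    rcases h.2 with h' | h'
    · have := (h₂ ▸ h').2
      rw [inn_sub_basis] at this
      exact ⟨k - 1, by push_cast; linarith⟩
    · have := (h₂ ▸ h').2
      rw [inn_sub_basis] at this
      exact ⟨k + 1, by push_cast; linarith⟩

theorem stmt9 {N : ℕ} (G : SimpleGraph (Fin N)) (hG : G.Connected)
    (F : Set (Fin N → ℝ)) (hF : IsFacet G F)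
    (v : Fin N) (c : G.Walk v v) (hc : c.IsCycle) :
    Nat.card {r : Fin c.length //
        stdBasis (c.getVert (r : ℕ)) - stdBasis (c.getVert ((r : ℕ) + 1)) ∈ F} =
    Nat.card {r : Fin c.length //
        stdBasis (c.getVert ((r : ℕ) + 1)) - stdBasis (c.getVert (r : ℕ)) ∈ F} := by
  classical
  obtain ⟨⟨α, h₁, h₂⟩, hrank⟩ := hF
  rcases Set.eq_empty_or_nonempty F with hFe | ⟨x₀, hx₀⟩
  · subst hFe
    simp
  · have key : ∀ i j : Fin N, G.Adj i j →
        (stdBasis i - stdBasis j ∈ F ↔ α i - α j = -1) := by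
      intro i j hij
      rw [h₂]
      constructor
      · rintro ⟨-, hv⟩; rwa [inn_sub_basis] at hv
      · intro hv; exact ⟨⟨i, j, hij, rfl⟩, by rwa [inn_sub_basis]⟩
    set n := c.length with hn
    set g : ℕ → ℝ := fun r => α (c.getVert (r + 1)) - α (c.getVert r) with hg
    have hsum : ∑ r : Fin n, g (r : ℕ) = 0 := by
      rw [Fin.sum_univ_eq_sum_range, Finset.sum_range_sub (fun r => α (c.getVert r))]
      simp [hn, SimpleGraph.Walk.getVert_length]
    have htri : ∀ r : Fin n, g (r : ℕ) = -1 ∨ g (r : ℕ) = 0 ∨ g (r : ℕ) = 1 := by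
      intro r
      have hadj := c.adj_getVert_succ r.isLt
      obtain ⟨k, hk⟩ := diff_int G F α h₂ hrank x₀ hx₀ (c.getVert ((r : ℕ) + 1)) (c.getVert (r : ℕ))
      have hb1 := h₁ _ ⟨_, _, hadj, rfl⟩
      have hb2 := h₁ _ ⟨_, _, hadj.symm, rfl⟩
      rw [inn_sub_basis] at hb1 hb2
      simp only [hg]
      have hk1 : (-1 : ℝ) ≤ (k : ℝ) := by linarith
      have hk2 : (k : ℝ) ≤ 1 := by linarith
      have hk1' : (-1 : ℤ) ≤ k := by exact_mod_cast hk1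
      have hk2' : k ≤ 1 := by exact_mod_cast hk2
      interval_cases k <;> push_cast at hk <;>
        [exact Or.inl (by linarith);
         exact Or.inr (Or.inl (by linarith));
         exact Or.inr (Or.inr (by linarith))]
    have e1 : ∀ r : Fin n,
        (stdBasis (c.getVert (r : ℕ)) - stdBasis (c.getVert ((r : ℕ) + 1)) ∈ F) ↔ g (r : ℕ) = 1 := by
      intro r
      rw [key _ _ (c.adj_getVert_succ r.isLt)]
      simp only [hg]
      constructor <;> intro h <;> linarith
    have e2 : ∀ r : Fin n,
        (stdBasis (c.getVert ((r : ℕ) + 1)) - stdBasis (c.getVert (r : ℕ)) ∈ F) ↔ g (r : ℕ) = -1 := by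
      intro r
      rw [key _ _ (c.adj_getVert_succ r.isLt).symm]
    have hcast : ((Finset.univ.filter (fun r : Fin n => g (r : ℕ) = 1)).card : ℝ) =
        ((Finset.univ.filter (fun r : Fin n => g (r : ℕ) = -1)).card : ℝ) := by
      have h0 : ∑ r : Fin n,
          ((if g (r : ℕ) = 1 then (1 : ℝ) else 0) - (if g (r : ℕ) = -1 then 1 else 0)) =
          ∑ r : Fin n, g (r : ℕ) := by
        apply Finset.sum_congr rfl
        intro r _
        rcases htri r with h | h | h <;> rw [h] <;> norm_num
      rw [hsum, Finset.sum_sub_distrib, Finset.sum_boole, Finset.sum_boole, sub_eq_zero] at h0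
      exact_mod_cast h0
    have hcard : (Finset.univ.filter (fun r : Fin n => g (r : ℕ) = 1)).card =
        (Finset.univ.filter (fun r : Fin n => g (r : ℕ) = -1)).card := by exact_mod_cast hcast
    rw [Nat.card_eq_fintype_card, Nat.card_eq_fintype_card, Fintype.card_subtype,
      Fintype.card_subtype]
    rw [Finset.filter_congr (fun r _ => e1 r), Finset.filter_congr (fun r _ => e2 r)]
    exact hcard
end

section
/- For a connected graph G on N vertices and any facet F of ∇_G, the number of facets F' of ∇_G with the same (undirected) facet subgraph as F, i.e. G_{F'} = G_F, is at most 2^{N−1}. -/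
section Helpers

lemma inn_add_left {N : ℕ} (x y β : Fin N → ℝ) : inn (x + y) β = inn x β + inn y β := by
  simp [inn, add_mul, Finset.sum_add_distrib]

lemma inn_sub_left {N : ℕ} (x y β : Fin N → ℝ) : inn (x - y) β = inn x β - inn y β := by
  simp [inn, sub_mul, Finset.sum_sub_distrib]

lemma inn_smul_left {N : ℕ} (c : ℝ) (x β : Fin N → ℝ) : inn (c • x) β = c * inn x β := by
  simp [inn, Finset.mul_sum, mul_assoc]

lemma inn_std {N : ℕ} (i : Fin N) (β : Fin N → ℝ) : inn (stdBasis i) β = β i := by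
  classical
  simp [inn, stdBasis, Pi.single_apply, ite_mul]

lemma inn_sub_std {N : ℕ} (i j : Fin N) (β : Fin N → ℝ) :
    inn (stdBasis i - stdBasis j) β = β i - β j := by
  rw [inn_sub_left, inn_std, inn_std]

/-- The crossing lemma: for a facet `F` containing some vector, there is no proper
nonempty vertex set `C` closed under the facet graph adjacency. -/
lemma crossing {N : ℕ} (G : SimpleGraph (Fin N)) (F : Set (Fin N → ℝ))
    (hF : IsFacet G F) (C : Finset (Fin N))
    (hclosed : ∀ a b : Fin N, (faceGraph F).Adj a b → (a ∈ C ↔ b ∈ C))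
    (x0 : Fin N → ℝ) (hx0 : x0 ∈ F)
    (v : Fin N) (hv : v ∈ C) (w : Fin N) (hw : w ∉ C) : False := by
  classical
  obtain ⟨⟨α, hge, hFeq⟩, hrank⟩ := hF
  have hmem : ∀ x, x ∈ F ↔ x ∈ nabla G ∧ inn x α = -1 := by
    intro x; rw [hFeq]; exact Iff.rfl
  set coef : Fin 3 → Fin N → ℝ :=
    ![fun _ => 1, α, fun i => if i ∈ C then 1 else 0] with hcoef
  set L : (Fin N → ℝ) →ₗ[ℝ] (Fin 3 → ℝ) :=
    { toFun := fun x => fun k => inn x (coef k)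
      map_add' := by intro x y; funext k; simp [inn_add_left]
      map_smul' := by intro c x; funext k; simp [inn_smul_left] } with hLdef
  have hLapp : ∀ (x : Fin N → ℝ) (k : Fin 3), L x k = inn x (coef k) := fun _ _ => rfl
  have hLF : ∀ x ∈ F, L x = ![0, -1, 0] := by
    intro x hx
    obtain ⟨⟨i, j, hadj, rfl⟩, hinn⟩ := (hmem x).1 hx
    have hij : i ≠ j := hadj.ne
    have hC : i ∈ C ↔ j ∈ C := hclosed i j (by
      rw [faceGraph, SimpleGraph.fromRel_adj]; exact ⟨hij, Or.inl hx⟩)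
    funext k
    fin_cases k
    · rw [hLapp]; simp [hcoef, inn_sub_std]
    · rw [hLapp]; simpa [hcoef] using hinn
    · rw [hLapp]; simp only [hcoef, inn_sub_std]
      by_cases hiC : i ∈ C
      · simp [Matrix.cons_val_succ, hiC, hC.mp hiC]
      · have hjC : j ∉ C := fun h => hiC (hC.mpr h)
        simp [Matrix.cons_val_succ, hiC, hjC]
  -- vectorSpan F is contained in ker L
  have hker : vectorSpan ℝ F ≤ LinearMap.ker L := by
    rw [vectorSpan_def]
    apply Submodule.span_le.mpr
    rintro z hz
    rw [Set.mem_vsub] at hz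
    obtain ⟨x, hx, y, hy, rfl⟩ := hz
    rw [SetLike.mem_coe, LinearMap.mem_ker, vsub_eq_sub, map_sub, hLF x hx, hLF y hy, sub_self]
  -- L is surjective
  obtain ⟨⟨i0, j0, hadj0, hx0eq⟩, hinn0⟩ := (hmem x0).1 hx0
  have hu3 : L x0 = ![0, -1, 0] := hLF x0 hx0
  have hu1 : L (stdBasis w) = ![1, α w, 0] := by
    funext k; fin_cases k <;> rw [hLapp] <;> simp [hcoef, inn_std, Matrix.cons_val_succ, hw]
  have hu2 : L (stdBasis v) = ![1, α v, 1] := by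
    funext k; fin_cases k <;> rw [hLapp] <;> simp [hcoef, inn_std, Matrix.cons_val_succ, hv]
  have hsurj : Function.Surjective L := by
    intro y
    refine ⟨(y 0 - y 2) • stdBasis w + y 2 • stdBasis v +
      (α w * (y 0 - y 2) + α v * y 2 - y 1) • x0, ?_⟩
    rw [map_add, map_add, map_smul, map_smul, map_smul, hu1, hu2, hu3]
    funext k
    fin_cases k <;>
      simp [Matrix.cons_val_succ, Pi.smul_apply, smul_eq_mul] <;> ring
  have hrange : LinearMap.range L = ⊤ := LinearMap.range_eq_top.mpr hsurj
  have h1 := LinearMap.finrank_range_add_finrank_ker L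
  rw [hrange, finrank_top, Module.finrank_fin_fun, Module.finrank_fin_fun] at h1
  have h2 : Module.finrank ℝ (vectorSpan ℝ F) ≤ Module.finrank ℝ (LinearMap.ker L) :=
    Submodule.finrank_mono hker
  rw [hrank] at h2
  omega

end Helpers

theorem stmt12 {N : ℕ} (G : SimpleGraph (Fin N)) (hG : G.Connected)
    (F : Set (Fin N → ℝ)) (hF : IsFacet G F) :
    {F' : Set (Fin N → ℝ) | IsFacet G F' ∧ faceGraph F' = faceGraph F}.Finite ∧
    {F' : Set (Fin N → ℝ) | IsFacet G F' ∧ faceGraph F' = faceGraph F}.ncard ≤ 2^(N-1) := by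
  classical
  set S := {F' : Set (Fin N → ℝ) | IsFacet G F' ∧ faceGraph F' = faceGraph F} with hSdef
  have hnab : (nabla G).Finite := by
    have hsub : nabla G ⊆ (fun p : Fin N × Fin N => stdBasis p.1 - stdBasis p.2) '' Set.univ := by
      rintro x ⟨i, j, _, rfl⟩; exact ⟨(i, j), trivial, rfl⟩
    exact (Set.finite_univ.image _).subset hsub
  have hsubn : ∀ F' ∈ S, F' ⊆ nabla G := by
    rintro F' ⟨⟨⟨α, _, rfl⟩, _⟩, _⟩ x hx; exact hx.1
  have hSfin : S.Finite := hnab.finite_subsets.subset (fun F' hF' => hsubn F' hF')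
  refine ⟨hSfin, ?_⟩
  -- membership iff for a facet
  have hadjiff : ∀ F' ∈ S, ∀ a b : Fin N, (faceGraph F).Adj a b →
      (stdBasis a - stdBasis b ∈ F' ∨ stdBasis b - stdBasis a ∈ F') := by
    rintro F' ⟨_, hgr⟩ a b hab
    rw [← hgr, faceGraph, SimpleGraph.fromRel_adj] at hab
    exact hab.2
  by_cases hFne : F.Nonempty
  · obtain ⟨x0, hx0⟩ := hFne
    have hFS : F ∈ S := ⟨hF, rfl⟩
    obtain ⟨i0, j0, hadj0, hx0eq⟩ := hsubn F hFS hx0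
    set H := faceGraph F with hH
    set r := i0 with hr
    -- every vertex is reachable from r in H
    have hreach : ∀ u, H.Reachable r u := by
      intro u
      by_contra hu
      refine crossing G F hF (Finset.univ.filter fun z => H.Reachable r z) ?_ x0 hx0 r ?_ u ?_
      · intro a b hab
        simp only [Finset.mem_filter, Finset.mem_univ, true_and]
        exact ⟨fun h => h.trans hab.reachable, fun h => h.trans hab.symm.reachable⟩
      · exact Finset.mem_filter.mpr ⟨Finset.mem_univ r, SimpleGraph.Reachable.refl r⟩
      · simpa only [Finset.mem_filter, Finset.mem_univ, true_and] using hu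
    have hHconn : H.Connected := by
      rw [SimpleGraph.connected_iff]
      exact ⟨fun a b => (hreach a).symm.trans (hreach b), ⟨r⟩⟩
    -- parent function
    have hpar : ∀ i : Fin N, i ≠ r → ∃ j, H.Adj j i ∧ H.dist r j + 1 = H.dist r i := by
      intro i hi
      obtain ⟨p, hp⟩ := (hreach i).exists_walk_length_eq_dist
      obtain ⟨j, hadj, q, hq⟩ := SimpleGraph.Walk.exists_eq_cons_of_ne hi p.reverse
      refine ⟨j, hadj.symm, ?_⟩
      have l1 : H.dist r j ≤ q.reverse.length := SimpleGraph.dist_le _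
      have l2 : q.length + 1 = p.length := by
        have := congrArg SimpleGraph.Walk.length hq
        simpa [SimpleGraph.Walk.length_reverse] using this.symm
      have l3 : H.dist r i ≤ H.dist r j + 1 := by
        have hji : H.dist j i ≤ 1 := by
          simpa using SimpleGraph.dist_le (SimpleGraph.Walk.cons hadj.symm SimpleGraph.Walk.nil)
        calc H.dist r i ≤ H.dist r j + H.dist j i := hHconn.dist_triangle
          _ ≤ H.dist r j + 1 := by omega
      rw [SimpleGraph.Walk.length_reverse] at l1
      omega
    choose par hpadj hpdist using hpar
    set Φ : Set (Fin N → ℝ) → ({i : Fin N // i ≠ r} → Bool) :=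
      fun F' => fun i => decide (stdBasis (par i.1 i.2) - stdBasis i.1 ∈ F') with hΦdef
    have hinj : Set.InjOn Φ S := by
      intro F1 h1 F2 h2 hΦ
      obtain ⟨⟨⟨α1, hge1, heq1⟩, hrk1⟩, hgr1⟩ := h1
      obtain ⟨⟨⟨α2, hge2, heq2⟩, hrk2⟩, hgr2⟩ := h2
      have hmem1 : ∀ x, x ∈ F1 ↔ x ∈ nabla G ∧ inn x α1 = -1 := by
        intro x; rw [heq1]; exact Iff.rfl
      have hmem2 : ∀ x, x ∈ F2 ↔ x ∈ nabla G ∧ inn x α2 = -1 := by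
        intro x; rw [heq2]; exact Iff.rfl
      have hD1 : ∀ a b : Fin N, H.Adj a b →
          (stdBasis a - stdBasis b ∈ F1 ∨ stdBasis b - stdBasis a ∈ F1) :=
        fun a b hab => hadjiff F1 ⟨⟨⟨α1, hge1, heq1⟩, hrk1⟩, hgr1⟩ a b hab
      have hD2 : ∀ a b : Fin N, H.Adj a b →
          (stdBasis a - stdBasis b ∈ F2 ∨ stdBasis b - stdBasis a ∈ F2) :=
        fun a b hab => hadjiff F2 ⟨⟨⟨α2, hge2, heq2⟩, hrk2⟩, hgr2⟩ a b hab
      have key : ∀ n : ℕ, ∀ i : Fin N, H.dist r i = n →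
          α1 i - α1 r = α2 i - α2 r := by
        intro n
        induction n using Nat.strong_induction_on with
        | _ n ih =>
          intro i hdi
          by_cases hir : i = r
          · rw [hir, sub_self, sub_self]
          · have hadjp := hpadj i hir
            have hdp := hpdist i hir
            set j := par i hir with hj
            have ihj : α1 j - α1 r = α2 j - α2 r := by
              refine ih (H.dist r j) ?_ j rfl
              omega
            have hΦi := congrFun hΦ ⟨i, hir⟩
            simp only [hΦdef, decide_eq_decide] at hΦi
            by_cases hm : stdBasis j - stdBasis i ∈ F1
            · have hm2 : stdBasis j - stdBasis i ∈ F2 := hΦi.mp hm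
              have e1 : α1 j - α1 i = -1 := by
                have := ((hmem1 _).1 hm).2; rwa [inn_sub_std] at this
              have e2 : α2 j - α2 i = -1 := by
                have := ((hmem2 _).1 hm2).2; rwa [inn_sub_std] at this
              linarith
            · have hm1' : stdBasis i - stdBasis j ∈ F1 :=
                (hD1 j i hadjp).resolve_left hm
              have hm2' : stdBasis i - stdBasis j ∈ F2 :=
                (hD2 j i hadjp).resolve_left (fun h => hm (hΦi.mpr h))
              have e1 : α1 i - α1 j = -1 := by
                have := ((hmem1 _).1 hm1').2; rwa [inn_sub_std] at this
              have e2 : α2 i - α2 j = -1 := by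
                have := ((hmem2 _).1 hm2').2; rwa [inn_sub_std] at this
              linarith
      ext x
      rw [hmem1, hmem2]
      constructor
      · rintro ⟨hxn, hxi⟩
        refine ⟨hxn, ?_⟩
        obtain ⟨a, b, hab, rfl⟩ := hxn
        rw [inn_sub_std] at hxi ⊢
        have ka := key (H.dist r a) a rfl
        have kb := key (H.dist r b) b rfl
        linarith
      · rintro ⟨hxn, hxi⟩
        refine ⟨hxn, ?_⟩
        obtain ⟨a, b, hab, rfl⟩ := hxn
        rw [inn_sub_std] at hxi ⊢
        have ka := key (H.dist r a) a rfl
        have kb := key (H.dist r b) b rfl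
        linarith
    calc S.ncard = (Φ '' S).ncard := (Set.ncard_image_of_injOn hinj).symm
      _ ≤ (Set.univ : Set ({i : Fin N // i ≠ r} → Bool)).ncard :=
          Set.ncard_le_ncard (Set.subset_univ _) Set.finite_univ
      _ = Fintype.card ({i : Fin N // i ≠ r} → Bool) := by
          rw [Set.ncard_univ, Nat.card_eq_fintype_card]
      _ ≤ 2 ^ (N - 1) := by
          rw [Fintype.card_fun]
          have hcs : Fintype.card {i : Fin N // i ≠ r} = N - 1 := by
            have := Fintype.card_subtype_compl (fun i : Fin N => i = r)
            simp only [Fintype.card_subtype_eq, Fintype.card_fin] at this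
            convert this using 2
          rw [hcs, Fintype.card_bool]
  · -- F is empty, so every F' in S is empty
    have hFe : F = ∅ := Set.not_nonempty_iff_eq_empty.mp hFne
    have hsing : S ⊆ {∅} := by
      rintro F' ⟨hf', hgr⟩
      have : F' = ∅ := by
        by_contra hne
        obtain ⟨x, hx⟩ := Set.nonempty_iff_ne_empty.mpr hne
        obtain ⟨i, j, hadj, hxeq⟩ := hsubn F' ⟨hf', hgr⟩ hx
        have hA : (faceGraph F').Adj i j := by
          rw [faceGraph, SimpleGraph.fromRel_adj]
          exact ⟨hadj.ne, Or.inl (hxeq ▸ hx)⟩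
        rw [hgr, hFe, faceGraph, SimpleGraph.fromRel_adj] at hA
        simpa using hA.2
      exact this ▸ rfl
    calc S.ncard ≤ ({∅} : Set (Set (Fin N → ℝ))).ncard :=
        Set.ncard_le_ncard hsing (Set.finite_singleton _)
      _ = 1 := Set.ncard_singleton _
      _ ≤ 2 ^ (N - 1) := Nat.one_le_two_pow
end

section
/- Let F be a proper face of ∇_G. Then F is affinely independent if and only if G_F is a forest. -/
lemma sum_single_mul {N : ℕ} (a : Fin N) (φ : Fin N → ℝ) :
    ∑ v, (Pi.single a 1 : Fin N → ℝ) v * φ v = φ a := by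
  rw [Finset.sum_eq_single a]
  · simp
  · intro b _ hb; simp [Pi.single_eq_of_ne hb]
  · simp

lemma inn_stdBasis_sub {N : ℕ} (i j : Fin N) (φ : Fin N → ℝ) :
    inn (stdBasis i - stdBasis j) φ = φ i - φ j := by
  unfold inn stdBasis
  simp only [Pi.sub_apply, sub_mul]
  rw [Finset.sum_sub_distrib, sum_single_mul, sum_single_mul]

lemma stdBasis_sub_inj {N : ℕ} {i j a b : Fin N} (hij : i ≠ j) (hab : a ≠ b)
    (h : stdBasis i - stdBasis j = stdBasis a - stdBasis b) : i = a ∧ j = b := by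
  have hi := congrFun h i
  have hj := congrFun h j
  simp only [stdBasis, Pi.sub_apply, Pi.single_eq_same] at hi hj
  rw [Pi.single_eq_of_ne hij] at hi
  rw [Pi.single_eq_of_ne hij.symm] at hj
  by_cases hai : a = i
  · subst hai
    refine ⟨rfl, ?_⟩
    by_cases hbj : b = j
    · exact hbj.symm
    · rw [Pi.single_eq_of_ne (fun hh => hbj hh.symm), Pi.single_eq_of_ne hij.symm] at hj
      norm_num at hj
  · rw [Pi.single_eq_of_ne (fun hh => hai hh.symm)] at hi
    by_cases hbi : b = i
    · subst hbi; rw [Pi.single_eq_same] at hi; norm_num at hi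
    · rw [Pi.single_eq_of_ne (fun hh => hbi hh.symm)] at hi; norm_num at hi

lemma stdBasis_sub_ne_zero {N : ℕ} {i j : Fin N} (h : i ≠ j) :
    stdBasis i - stdBasis j ≠ (0 : Fin N → ℝ) := by
  intro hc
  have := congrFun hc i
  simp only [stdBasis, Pi.sub_apply, Pi.single_eq_same, Pi.zero_apply,
    Pi.single_eq_of_ne h] at this
  norm_num at this

lemma walk_edges_getElem {V : Type*} {G : SimpleGraph V} {u v : V} (p : G.Walk u v) :
    ∀ (k : ℕ) (hk : k < p.length),
      p.edges[k]'(by rw [SimpleGraph.Walk.length_edges]; exact hk)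
        = s(p.getVert k, p.getVert (k+1)) := by
  induction p with
  | nil => intro k hk; simp at hk
  | cons h q ih =>
    intro k hk
    cases k with
    | zero =>
      simp [SimpleGraph.Walk.edges_cons, SimpleGraph.Walk.getVert_zero,
        SimpleGraph.Walk.getVert_cons_succ]
    | succ k =>
      have hk' : k < q.length := by simpa [SimpleGraph.Walk.length_cons] using hk
      simpa [SimpleGraph.Walk.edges_cons, SimpleGraph.Walk.getVert_cons_succ] using ih k hk'

theorem stmt15 {N : ℕ} (G : SimpleGraph (Fin N)) (hG : G.Connected)
    (F : Set (Fin N → ℝ)) (hF : IsFace G F) :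
    AffineIndependent ℝ (fun x : F => (x : Fin N → ℝ)) ↔ (faceGraph F).IsAcyclic := by
  classical
  obtain ⟨α, hα, hFeq⟩ := hF
  -- basic facts
  have hval : ∀ a b : Fin N, stdBasis a - stdBasis b ∈ F → α a - α b = -1 := by
    intro a b hab
    rw [hFeq] at hab
    have := hab.2
    rwa [inn_stdBasis_sub] at this
  have hmem : ∀ x ∈ F, ∃ a b : Fin N, G.Adj a b ∧ stdBasis a - stdBasis b ∈ F ∧
      x = stdBasis a - stdBasis b := by
    intro x hx
    have hx' := hx
    rw [hFeq] at hx'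
    obtain ⟨a, b, hab, hxe⟩ := hx'.1
    exact ⟨a, b, hab, hxe ▸ hx, hxe⟩
  have hnotboth : ∀ a b : Fin N, stdBasis a - stdBasis b ∈ F →
      stdBasis b - stdBasis a ∈ F → False := by
    intro a b h1 h2
    have := hval a b h1
    have := hval b a h2
    linarith
  have hadjF : ∀ a b : Fin N, stdBasis a - stdBasis b ∈ F → (faceGraph F).Adj a b := by
    intro a b hab
    have hne : a ≠ b := by
      rintro rfl
      rw [sub_self] at hab
      rw [hFeq] at hab
      obtain ⟨i, j, hij, he⟩ := hab.1
      exact stdBasis_sub_ne_zero hij.ne he.symm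
    exact (SimpleGraph.fromRel_adj _ a b).mpr ⟨hne, Or.inl hab⟩
  constructor
  · -- affinely independent → acyclic
    intro hAI v c hc
    have hn3 : 3 ≤ c.length := hc.three_le_length
    set n := c.length with hn
    have hadj : ∀ k, k < n → (faceGraph F).Adj (c.getVert k) (c.getVert (k+1)) :=
      fun k hk => c.adj_getVert_succ hk
    have hor : ∀ k, k < n → (stdBasis (c.getVert k) - stdBasis (c.getVert (k+1)) ∈ F ∨
        stdBasis (c.getVert (k+1)) - stdBasis (c.getVert k) ∈ F) := by
      intro k hk
      exact ((SimpleGraph.fromRel_adj _ _ _).mp (hadj k hk)).2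
    set u : ℕ → (Fin N → ℝ) := fun k =>
      if stdBasis (c.getVert k) - stdBasis (c.getVert (k+1)) ∈ F then
        stdBasis (c.getVert k) - stdBasis (c.getVert (k+1))
      else stdBasis (c.getVert (k+1)) - stdBasis (c.getVert k) with hu
    set ε : ℕ → ℝ := fun k => α (c.getVert (k+1)) - α (c.getVert k) with he
    have huF : ∀ k, k < n → u k ∈ F := by
      intro k hk
      by_cases hmemk : stdBasis (c.getVert k) - stdBasis (c.getVert (k+1)) ∈ F
      · simp only [hu, if_pos hmemk]; exact hmemk
      · simp only [hu, if_neg hmemk]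
        exact (hor k hk).resolve_left hmemk
    have heps : ∀ k, k < n → ε k • u k = stdBasis (c.getVert k) - stdBasis (c.getVert (k+1))
        ∧ (ε k = 1 ∨ ε k = -1) := by
      intro k hk
      by_cases hmemk : stdBasis (c.getVert k) - stdBasis (c.getVert (k+1)) ∈ F
      · have h1 := hval _ _ hmemk
        have he1 : ε k = 1 := by simp only [he]; linarith
        refine ⟨?_, Or.inl he1⟩
        rw [he1, one_smul]
        simp only [hu, if_pos hmemk]
      · have hmem2 := (hor k hk).resolve_left hmemk
        have h1 := hval _ _ hmem2
        have he1 : ε k = -1 := by simp only [he]; linarith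
        refine ⟨?_, Or.inr he1⟩
        rw [he1]
        simp only [hu, if_neg hmemk]
        rw [neg_one_smul, neg_sub]
    have hnodup : c.edges.Nodup := hc.isCircuit.isTrail.edges_nodup
    have hqinj : ∀ k l : Fin n, u k = u l → k = l := by
      intro k l huv
      have hk : (k : ℕ) < n := k.2
      have hl : (l : ℕ) < n := l.2
      have hnek := (hadj k hk).ne
      have hnel := (hadj l hl).ne
      have hsym : s(c.getVert k, c.getVert (k+1)) = s(c.getVert l, c.getVert (l+1)) := by
        by_cases h1 : stdBasis (c.getVert (k:ℕ)) - stdBasis (c.getVert ((k:ℕ)+1)) ∈ F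
        · by_cases h2 : stdBasis (c.getVert (l:ℕ)) - stdBasis (c.getVert ((l:ℕ)+1)) ∈ F
          · obtain ⟨ha, hb⟩ := stdBasis_sub_inj hnek hnel
              (by simpa only [hu, if_pos h1, if_pos h2] using huv)
            rw [ha, hb]
          · obtain ⟨ha, hb⟩ := stdBasis_sub_inj hnek hnel.symm
              (by simpa only [hu, if_pos h1, if_neg h2] using huv)
            rw [ha, hb]
            exact Sym2.eq_swap
        · by_cases h2 : stdBasis (c.getVert (l:ℕ)) - stdBasis (c.getVert ((l:ℕ)+1)) ∈ F
          · obtain ⟨ha, hb⟩ := stdBasis_sub_inj hnek.symm hnel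
              (by simpa only [hu, if_neg h1, if_pos h2] using huv)
            rw [← ha, ← hb]
            exact Sym2.eq_swap
          · obtain ⟨ha, hb⟩ := stdBasis_sub_inj hnek.symm hnel.symm
              (by simpa only [hu, if_neg h1, if_neg h2] using huv)
            rw [hb, ha]
      have hklen : (k : ℕ) < c.edges.length := by
        rw [SimpleGraph.Walk.length_edges]; exact hk
      have hllen : (l : ℕ) < c.edges.length := by
        rw [SimpleGraph.Walk.length_edges]; exact hl
      have hge : c.edges[(k:ℕ)]'hklen = c.edges[(l:ℕ)]'hllen := by
        rw [walk_edges_getElem c k hk, walk_edges_getElem c l hl]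
        exact hsym
      exact Fin.ext ((List.Nodup.getElem_inj_iff hnodup).mp hge)
    let q : Fin n ↪ F := ⟨fun k => ⟨u k, huF k k.2⟩,
      fun k l h => hqinj k l (congrArg Subtype.val h)⟩
    have hAI2 := hAI.comp_embedding q
    rw [affineIndependent_iff] at hAI2
    have hsum1 : ∑ k : Fin n, ε (k : ℕ) = 0 := by
      rw [Fin.sum_univ_eq_sum_range]
      have h1 := Finset.sum_range_sub (fun k => α (c.getVert k)) n
      simp only [he]
      rw [h1, hn, SimpleGraph.Walk.getVert_length, SimpleGraph.Walk.getVert_zero, sub_self]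
    have hsum2 : ∑ k : Fin n, ε (k : ℕ) •
        ((fun x : F => (x : Fin N → ℝ)) ∘ q) k = 0 := by
      have h1 : ∀ k ∈ (Finset.univ : Finset (Fin n)), ε (k : ℕ) •
          ((fun x : F => (x : Fin N → ℝ)) ∘ q) k
          = stdBasis (c.getVert (k : ℕ)) - stdBasis (c.getVert ((k : ℕ)+1)) :=
        fun k _ => (heps k k.2).1
      rw [Finset.sum_congr rfl h1,
        Fin.sum_univ_eq_sum_range
          (fun k => stdBasis (c.getVert k) - stdBasis (c.getVert (k+1))) n]
      have h2 := Finset.sum_range_sub' (fun k => stdBasis (c.getVert k) : ℕ → Fin N → ℝ) n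
      rw [h2, hn, SimpleGraph.Walk.getVert_length, SimpleGraph.Walk.getVert_zero, sub_self]
    have hz := hAI2 Finset.univ (fun k => ε (k : ℕ)) hsum1 hsum2
    have h0 : (0 : ℕ) < n := by omega
    have hz0 := hz ⟨0, h0⟩ (Finset.mem_univ _)
    rcases (heps 0 h0).2 with h | h <;> simp only [] at hz0 <;> rw [hz0] at h <;> norm_num at h
  · -- acyclic → affinely independent
    intro hAc
    rw [affineIndependent_iff]
    intro s w hw0 hsum x0 hx0
    obtain ⟨i, j, hijadj, hijF, hx0e⟩ := hmem x0.1 x0.2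
    have hHij : (faceGraph F).Adj i j := hadjF i j hijF
    have hbr : (faceGraph F).IsBridge s(i,j) :=
      (SimpleGraph.isAcyclic_iff_forall_adj_isBridge.mp hAc) hHij
    rw [SimpleGraph.isBridge_iff] at hbr
    set H' := faceGraph F \ SimpleGraph.fromEdgeSet {s(i,j)} with hH'
    set φ : Fin N → ℝ := fun z => if H'.Reachable i z then 1 else 0 with hφ
    have hφi : φ i = 1 := by
      simp only [hφ]
      rw [if_pos (SimpleGraph.Reachable.refl i)]
    have hφj : φ j = 0 := by
      simp only [hφ]
      rw [if_neg (show ¬ H'.Reachable i j from hbr)]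
    have hLx0 : inn (x0 : Fin N → ℝ) φ = 1 := by
      rw [hx0e, inn_stdBasis_sub, hφi, hφj]
      norm_num
    have hLother : ∀ x : F, x ∈ s → x ≠ x0 → inn (x : Fin N → ℝ) φ = 0 := by
      intro x _ hxne
      obtain ⟨a, b, habadj, habF, hxe⟩ := hmem x.1 x.2
      have hsne : s(a,b) ≠ s(i,j) := by
        intro hs
        rw [Sym2.eq_iff] at hs
        rcases hs with ⟨ha, hb⟩ | ⟨ha, hb⟩
        · subst ha; subst hb
          exact hxne (Subtype.ext (by rw [hxe, hx0e]))
        · subst ha; subst hb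
          exact hnotboth _ _ habF hijF
      have hH'ab : H'.Adj a b := by
        rw [hH', SimpleGraph.sdiff_adj]
        refine ⟨hadjF a b habF, ?_⟩
        rw [SimpleGraph.fromEdgeSet_adj]
        rintro ⟨hmemm, -⟩
        exact hsne (by simpa using hmemm)
      have hphi : φ a = φ b := by
        simp only [hφ]
        by_cases hra : H'.Reachable i a
        · rw [if_pos hra, if_pos (hra.trans hH'ab.reachable)]
        · rw [if_neg hra, if_neg (fun hrb => hra (hrb.trans hH'ab.symm.reachable))]
      rw [hxe, inn_stdBasis_sub, hphi, sub_self]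
    have hkey : ∑ x ∈ s, w x * inn (x : Fin N → ℝ) φ = 0 := by
      have h1 : ∀ x ∈ s, w x * inn (x : Fin N → ℝ) φ
          = ∑ z, (w x • (x : Fin N → ℝ)) z * φ z := by
        intro x _
        rw [inn, Finset.mul_sum]
        refine Finset.sum_congr rfl fun z _ => ?_
        simp only [Pi.smul_apply, smul_eq_mul]
        ring
      rw [Finset.sum_congr rfl h1, Finset.sum_comm]
      have h2 : ∀ z ∈ (Finset.univ : Finset (Fin N)),
          ∑ x ∈ s, (w x • (x : Fin N → ℝ)) z * φ z
          = (∑ x ∈ s, w x • (x : Fin N → ℝ)) z * φ z := by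
        intro z _
        rw [Finset.sum_apply, Finset.sum_mul]
      rw [Finset.sum_congr rfl h2, hsum]
      simp
    have hfin : ∑ x ∈ s, w x * inn (x : Fin N → ℝ) φ = w x0 * inn (x0 : Fin N → ℝ) φ :=
      Finset.sum_eq_single_of_mem x0 hx0
        (fun x hx hne => by rw [hLother x hx hne, mul_zero])
    rw [hkey, hLx0, mul_one] at hfin
    exact hfin.symm
end
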